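/- Let D be any class of objects in a triangulated category T with products and coproducts. If coloc(D) is reflective (the inclusion has a left adjoint), then coloc(D) = (^⊥D)^⊥; and if loc(D) is coreflective (the inclusion has a right adjoint), then loc(D) = ^⊥(D^⊥). -/

import Mathlib

open CategoryTheory Category Limits Pretriangulated

universe v u

namespace Paper

section General

variable {T : Type u} [Category.{v} T]

/-- A full subcategory (given by its class of objects) is closed under retracts. -/
def ClosedUnderRetracts (S : Set T) : Prop :=
  ∀ ⦃A B : T⦄, A ∈ S → (∃ (i : B ⟶ A) (r : A ⟶ B), i ≫ r = 𝟙 B) → B ∈ S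

/-- A full subcategory is weakly reflective: every object admits a weak reflection into it. -/
def WeaklyReflective (S : Set T) : Prop :=
  ∀ X : T, ∃ (X' : T) (l : X ⟶ X'), X' ∈ S ∧
    ∀ ⦃Y : T⦄, Y ∈ S → ∀ f : X ⟶ Y, ∃ g : X' ⟶ Y, l ≫ g = f

/-- A full subcategory is weakly coreflective. -/
def WeaklyCoreflective (S : Set T) : Prop :=
  ∀ X : T, ∃ (X' : T) (c : X' ⟶ X), X' ∈ S ∧
    ∀ ⦃Y : T⦄, Y ∈ S → ∀ f : Y ⟶ X, ∃ g : Y ⟶ X', g ≫ c = f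

/-- A full subcategory is reflective: the inclusion has a left adjoint. -/
def ReflectiveSet (S : Set T) : Prop :=
  (ObjectProperty.ι (P := (fun X => X ∈ S : ObjectProperty T))).IsRightAdjoint

/-- A full subcategory is coreflective: the inclusion has a right adjoint. -/
def CoreflectiveSet (S : Set T) : Prop :=
  (ObjectProperty.ι (P := (fun X => X ∈ S : ObjectProperty T))).IsLeftAdjoint

end General

/-- The data of an endofunctor together with a natural transformation from the identity
(a candidate reflection with its unit). -/
structure ReflectionData (T : Type u) [Category.{v} T] where
  L : T ⥤ T
  unit : 𝟭 T ⟶ L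

/-- The data of an endofunctor together with a natural transformation to the identity
(a candidate coreflection with its counit). -/
structure CoreflectionData (T : Type u) [Category.{v} T] where
  C : T ⥤ T
  counit : C ⟶ 𝟭 T

section ReflData

variable {T : Type u} [Category.{v} T]

/-- The `L`-local objects: the essential image of `L`. -/
def ReflectionData.localObjects (R : ReflectionData T) : Set T := R.L.essImage

/-- `(L, l)` is a reflection: every morphism to an `L`-local object factors uniquely
through the unit. -/
def ReflectionData.IsReflection (R : ReflectionData T) : Prop :=
  ∀ ⦃X W : T⦄, W ∈ R.localObjects → ∀ f : X ⟶ W,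
    ∃! g : R.L.obj X ⟶ W, R.unit.app X ≫ g = f

/-- The `C`-colocal objects: the essential image of `C`. -/
def CoreflectionData.colocalObjects (Q : CoreflectionData T) : Set T := Q.C.essImage

/-- `(C, c)` is a coreflection: every morphism from a `C`-colocal object factors uniquely
through the counit. -/
def CoreflectionData.IsCoreflection (Q : CoreflectionData T) : Prop :=
  ∀ ⦃X W : T⦄, W ∈ Q.colocalObjects → ∀ f : W ⟶ X,
    ∃! g : W ⟶ Q.C.obj X, g ≫ Q.counit.app X = f

end ReflData

section Triangulated

variable {T : Type u} [Category.{v} T] [HasZeroObject T] [Preadditive T] [HasShift T ℤ]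
  [∀ n : ℤ, (shiftFunctor T n).Additive] [Pretriangulated T]

/-- Closed under fibres: the first vertex of a distinguished triangle whose second and third
vertices lie in `S` lies in `S`. -/
def ClosedUnderFibres (S : Set T) : Prop :=
  ∀ ⦃X Y Z : T⦄ (u : X ⟶ Y) (v : Y ⟶ Z) (w : Z ⟶ X⟦(1:ℤ)⟧),
    (Triangle.mk u v w ∈ distTriang T) → Y ∈ S → Z ∈ S → X ∈ S

/-- Closed under cofibres. -/
def ClosedUnderCofibres (S : Set T) : Prop :=
  ∀ ⦃X Y Z : T⦄ (u : X ⟶ Y) (v : Y ⟶ Z) (w : Z ⟶ X⟦(1:ℤ)⟧),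
    (Triangle.mk u v w ∈ distTriang T) → X ∈ S → Y ∈ S → Z ∈ S

/-- Closed under extensions. -/
def ClosedUnderExtensions (S : Set T) : Prop :=
  ∀ ⦃X Y Z : T⦄ (u : X ⟶ Y) (v : Y ⟶ Z) (w : Z ⟶ X⟦(1:ℤ)⟧),
    (Triangle.mk u v w ∈ distTriang T) → X ∈ S → Z ∈ S → Y ∈ S

/-- `^⊥D`: objects `X` with `T(X, ΣᵏD) = 0` for all `D ∈ D` and all integers `k`. -/
def leftOrth (D : Set T) : Set T :=
  {X | ∀ ⦃E : T⦄, E ∈ D → ∀ k : ℤ, ∀ f : X ⟶ E⟦k⟧, f = 0}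

/-- `D^⊥`: objects `Y` with `T(ΣᵏD, Y) = 0` for all `D ∈ D` and all integers `k`. -/
def rightOrth (D : Set T) : Set T :=
  {Y | ∀ ⦃E : T⦄, E ∈ D → ∀ k : ℤ, ∀ f : E⟦k⟧ ⟶ Y, f = 0}

/-- `⊾D`: objects `X` with `T(X, ΣᵏD) = 0` for all `D ∈ D` and all `k ≤ 0`. -/
def leftSemiOrth (D : Set T) : Set T :=
  {X | ∀ ⦃E : T⦄, E ∈ D → ∀ k : ℤ, k ≤ 0 → ∀ f : X ⟶ E⟦k⟧, f = 0}

/-- `D⊿`: objects `Y` with `T(ΣᵏD, Y) = 0` for all `D ∈ D` and all `k ≥ 0`. -/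
def rightSemiOrth (D : Set T) : Set T :=
  {Y | ∀ ⦃E : T⦄, E ∈ D → ∀ k : ℤ, 0 ≤ k → ∀ f : E⟦k⟧ ⟶ Y, f = 0}

section WithLimits

variable [HasProducts.{v} T] [HasCoproducts.{v} T]

/-- Closed under all (small) products. -/
def ClosedUnderProducts (S : Set T) : Prop :=
  ∀ ⦃ι : Type v⦄ (f : ι → T), (∀ i, f i ∈ S) → (∏ᶜ f) ∈ S

/-- Closed under all (small) coproducts. -/
def ClosedUnderCoproducts (S : Set T) : Prop :=
  ∀ ⦃ι : Type v⦄ (f : ι → T), (∀ i, f i ∈ S) → (∐ f) ∈ S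

/-- Semilocalizing: closed under coproducts, cofibres and extensions. -/
def IsSemilocalizing (S : Set T) : Prop :=
  ClosedUnderCoproducts S ∧ ClosedUnderCofibres S ∧ ClosedUnderExtensions S

/-- Semicolocalizing: closed under products, fibres and extensions. -/
def IsSemicolocalizing (S : Set T) : Prop :=
  ClosedUnderProducts S ∧ ClosedUnderFibres S ∧ ClosedUnderExtensions S

/-- Localizing: closed under coproducts, fibres, cofibres and extensions. -/
def IsLocalizing (S : Set T) : Prop :=
  ClosedUnderCoproducts S ∧ ClosedUnderFibres S ∧ ClosedUnderCofibres S ∧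
    ClosedUnderExtensions S

/-- Colocalizing: closed under products, fibres, cofibres and extensions. -/
def IsColocalizing (S : Set T) : Prop :=
  ClosedUnderProducts S ∧ ClosedUnderFibres S ∧ ClosedUnderCofibres S ∧
    ClosedUnderExtensions S

/-- The smallest semilocalizing subcategory containing `D`. -/
def semiloc (D : Set T) : Set T := ⋂₀ {S : Set T | IsSemilocalizing S ∧ D ⊆ S}

/-- The smallest semicolocalizing subcategory containing `D`. -/
def semicoloc (D : Set T) : Set T := ⋂₀ {S : Set T | IsSemicolocalizing S ∧ D ⊆ S}

/-- The smallest localizing subcategory containing `D`. -/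
def loc (D : Set T) : Set T := ⋂₀ {S : Set T | IsLocalizing S ∧ D ⊆ S}

/-- The smallest colocalizing subcategory containing `D`. -/
def coloc (D : Set T) : Set T := ⋂₀ {S : Set T | IsColocalizing S ∧ D ⊆ S}

end WithLimits

end Triangulated


section Statements

variable {T : Type u} [Category.{v} T] [HasZeroObject T] [Preadditive T] [HasShift T ℤ]
  [∀ n : ℤ, (shiftFunctor T n).Additive] [Pretriangulated T]
  [HasProducts.{v} T] [HasCoproducts.{v} T]


open ZeroObject

section Aux

variable {S : Set T}

lemma shift_map_zero_iff {A B : T} (n : ℤ) (f : A ⟶ B) :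
    f⟦n⟧' = 0 ↔ f = 0 := by
  constructor
  · intro h
    exact (shiftFunctor T n).map_injective (by simpa using h)
  · rintro rfl; simp

lemma zero_mem_of_closed (hCof : ClosedUnderCofibres S) {A : T} (hA : A ∈ S) :
    (0 : T) ∈ S :=
  hCof (𝟙 A) (0 : A ⟶ 0) 0 (contractible_distinguished A) hA hA

lemma mem_of_iso_of_closed (hExt : ClosedUnderExtensions S) (h0 : (0 : T) ∈ S)
    {A B : T} (e : A ≅ B) (hA : A ∈ S) : B ∈ S := by
  have hdist : Triangle.mk e.hom (0 : B ⟶ 0) (0 : (0 : T) ⟶ A⟦(1:ℤ)⟧) ∈ distTriang T := by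
    refine isomorphic_distinguished _ (contractible_distinguished A) _ ?_
    exact Triangle.isoMk _ _ (Iso.refl A) e.symm (Iso.refl 0) (e.hom_inv_id.trans (id_comp _).symm) (by apply IsZero.eq_of_tgt; exact isZero_zero T) (by apply IsZero.eq_of_src; exact isZero_zero T)
  exact hExt e.hom 0 0 hdist hA h0

lemma shift_one_mem (hCof : ClosedUnderCofibres S) (h0 : (0 : T) ∈ S) {A : T}
    (hA : A ∈ S) : A⟦(1:ℤ)⟧ ∈ S :=
  hCof _ _ _ (rot_of_distTriang _ (contractible_distinguished A)) hA h0

lemma shift_neg_one_mem (hFib : ClosedUnderFibres S) (hExt : ClosedUnderExtensions S)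
    (h0 : (0 : T) ∈ S) {A : T} (hA : A ∈ S) : A⟦(-1:ℤ)⟧ ∈ S := by
  refine hFib _ _ _ (rot_of_distTriang _ (contractible_distinguished (A⟦(-1:ℤ)⟧))) h0 ?_
  exact mem_of_iso_of_closed hExt h0
    ((shiftFunctorCompIsoId T (-1:ℤ) (1:ℤ) (by ring)).symm.app A) hA

lemma shift_mem_of_closed (hFib : ClosedUnderFibres S) (hCof : ClosedUnderCofibres S)
    (hExt : ClosedUnderExtensions S) (h0 : (0 : T) ∈ S) {A : T} (hA : A ∈ S) (n : ℤ) :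
    A⟦n⟧ ∈ S := by
  induction n using Int.induction_on with
  | zero => exact mem_of_iso_of_closed hExt h0 ((shiftFunctorZero T ℤ).symm.app A) hA
  | succ n ih =>
      exact mem_of_iso_of_closed hExt h0
        (((shiftFunctorAdd' T (n : ℤ) 1 (n + 1) rfl).app A).symm) (shift_one_mem hCof h0 ih)
  | pred n ih =>
      exact mem_of_iso_of_closed hExt h0
        (((shiftFunctorAdd' T (-n : ℤ) (-1) (-n - 1) (by ring)).app A).symm)
        (shift_neg_one_mem hFib hExt h0 ih)

lemma leftOrth_shift {E : Set T} {X : T} (hX : X ∈ leftOrth E) (n : ℤ) :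
    X⟦n⟧ ∈ leftOrth E := by
  intro W hW k f
  have hg := hX hW (k - n)
    ((shiftFunctorCompIsoId T n (-n) (by ring)).inv.app X ≫ f⟦(-n)⟧' ≫
      (shiftFunctorAdd' T k (-n) (k - n) (by ring)).inv.app W)
  rw [← shift_map_zero_iff (-n) f,
      ← cancel_epi ((shiftFunctorCompIsoId T n (-n) (by ring)).inv.app X),
      ← cancel_mono ((shiftFunctorAdd' T k (-n) (k - n) (by ring)).inv.app W)]
  simpa using hg

lemma rightOrth_shift {E : Set T} {Y : T} (hY : Y ∈ rightOrth E) (n : ℤ) :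
    Y⟦n⟧ ∈ rightOrth E := by
  intro W hW k f
  have hg := hY hW (k - n)
    ((shiftFunctorAdd' T k (-n) (k - n) (by ring)).hom.app W ≫ f⟦(-n)⟧' ≫
      (shiftFunctorCompIsoId T n (-n) (by ring)).hom.app Y)
  rw [← shift_map_zero_iff (-n) f,
      ← cancel_epi ((shiftFunctorAdd' T k (-n) (k - n) (by ring)).hom.app W),
      ← cancel_mono ((shiftFunctorCompIsoId T n (-n) (by ring)).hom.app Y)]
  simpa using hg

lemma isLocalizing_leftOrth (E : Set T) : IsLocalizing (leftOrth E) := by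
  refine ⟨?_, ?_, ?_, ?_⟩
  · intro ι f hf W hW k g
    refine Sigma.hom_ext _ _ fun i => ?_
    rw [comp_zero]
    exact hf i hW k _
  · intro X Y Z u v w hT hY hZ W hW k f
    obtain ⟨g, hg⟩ := Triangle.yoneda_exact₂ _ (inv_rot_of_distTriang _ hT) f
      ((leftOrth_shift hZ (-1)) hW k _)
    rw [hg, show g = 0 from hY hW k g, comp_zero]; rfl
  · intro X Y Z u v w hT hX hY W hW k f
    obtain ⟨g, hg⟩ := Triangle.yoneda_exact₃ _ hT f (hY hW k _)
    rw [hg, show g = 0 from (leftOrth_shift hX 1) hW k g, comp_zero]; rfl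
  · intro X Y Z u v w hT hX hZ W hW k f
    obtain ⟨g, hg⟩ := Triangle.yoneda_exact₂ _ hT f (hX hW k _)
    rw [hg, show g = 0 from hZ hW k g, comp_zero]; rfl

lemma isColocalizing_rightOrth (E : Set T) : IsColocalizing (rightOrth E) := by
  refine ⟨?_, ?_, ?_, ?_⟩
  · intro ι f hf W hW k g
    refine Pi.hom_ext _ _ fun i => ?_
    rw [zero_comp]
    exact hf i hW k _
  · intro X Y Z u v w hT hY hZ W hW k f
    obtain ⟨g, hg⟩ := Triangle.coyoneda_exact₂ _ (inv_rot_of_distTriang _ hT) f (hY hW k _)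
    rw [hg, show g = 0 from (rightOrth_shift hZ (-1)) hW k g, zero_comp]; rfl
  · intro X Y Z u v w hT hX hY W hW k f
    obtain ⟨g, hg⟩ := Triangle.coyoneda_exact₃ _ hT f ((rightOrth_shift hX 1) hW k _)
    rw [hg, show g = 0 from hY hW k g, zero_comp]; rfl
  · intro X Y Z u v w hT hX hZ W hW k f
    obtain ⟨g, hg⟩ := Triangle.coyoneda_exact₂ _ hT f (hZ hW k _)
    rw [hg, show g = 0 from hX hW k g, zero_comp]; rfl

lemma subset_leftOrth_rightOrth (D : Set T) : D ⊆ leftOrth (rightOrth D) := by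
  intro E hE W hW k f
  have h0 := hW hE (-k) (f⟦(-k)⟧' ≫ (shiftFunctorCompIsoId T k (-k) (by ring)).hom.app W)
  rw [← shift_map_zero_iff (-k) f,
      ← cancel_mono ((shiftFunctorCompIsoId T k (-k) (by ring)).hom.app W)]
  simpa using h0

lemma subset_rightOrth_leftOrth (D : Set T) : D ⊆ rightOrth (leftOrth D) := by
  intro E hE W hW k f
  have h0 := (leftOrth_shift hW k) hE 0 (f ≫ (shiftFunctorZero T ℤ).inv.app E)
  rw [← cancel_mono ((shiftFunctorZero T ℤ).inv.app E)]
  simpa using h0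

lemma mem_loc {D : Set T} {X : T} :
    X ∈ loc D ↔ ∀ S : Set T, IsLocalizing S → D ⊆ S → X ∈ S := by
  simp only [loc, Set.mem_sInter, Set.mem_setOf_eq, and_imp]

lemma mem_coloc {D : Set T} {X : T} :
    X ∈ coloc D ↔ ∀ S : Set T, IsColocalizing S → D ⊆ S → X ∈ S := by
  simp only [coloc, Set.mem_sInter, Set.mem_setOf_eq, and_imp]

lemma subset_loc (D : Set T) : D ⊆ loc D :=
  fun _ hX => mem_loc.2 fun _ _ hD => hD hX

lemma subset_coloc (D : Set T) : D ⊆ coloc D :=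
  fun _ hX => mem_coloc.2 fun _ _ hD => hD hX

lemma loc_subset {D S : Set T} (hS : IsLocalizing S) (hD : D ⊆ S) : loc D ⊆ S :=
  fun _ hX => mem_loc.1 hX S hS hD

lemma coloc_subset {D S : Set T} (hS : IsColocalizing S) (hD : D ⊆ S) : coloc D ⊆ S :=
  fun _ hX => mem_coloc.1 hX S hS hD

lemma isLocalizing_loc (D : Set T) : IsLocalizing (loc D) := by
  refine ⟨?_, ?_, ?_, ?_⟩
  · intro ι f hf
    exact mem_loc.2 fun S hS hD => hS.1 f fun i => mem_loc.1 (hf i) S hS hD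
  · intro X Y Z u v w hT hY hZ
    exact mem_loc.2 fun S hS hD =>
      hS.2.1 u v w hT (mem_loc.1 hY S hS hD) (mem_loc.1 hZ S hS hD)
  · intro X Y Z u v w hT hX hY
    exact mem_loc.2 fun S hS hD =>
      hS.2.2.1 u v w hT (mem_loc.1 hX S hS hD) (mem_loc.1 hY S hS hD)
  · intro X Y Z u v w hT hX hZ
    exact mem_loc.2 fun S hS hD =>
      hS.2.2.2 u v w hT (mem_loc.1 hX S hS hD) (mem_loc.1 hZ S hS hD)

lemma isColocalizing_coloc (D : Set T) : IsColocalizing (coloc D) := by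
  refine ⟨?_, ?_, ?_, ?_⟩
  · intro ι f hf
    exact mem_coloc.2 fun S hS hD => hS.1 f fun i => mem_coloc.1 (hf i) S hS hD
  · intro X Y Z u v w hT hY hZ
    exact mem_coloc.2 fun S hS hD =>
      hS.2.1 u v w hT (mem_coloc.1 hY S hS hD) (mem_coloc.1 hZ S hS hD)
  · intro X Y Z u v w hT hX hY
    exact mem_coloc.2 fun S hS hD =>
      hS.2.2.1 u v w hT (mem_coloc.1 hX S hS hD) (mem_coloc.1 hY S hS hD)
  · intro X Y Z u v w hT hX hZ
    exact mem_coloc.2 fun S hS hD =>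
      hS.2.2.2 u v w hT (mem_coloc.1 hX S hS hD) (mem_coloc.1 hZ S hS hD)

lemma coreflection_prop (h : CoreflectiveSet S) (X : T) :
    ∃ (Γ : T) (ε : Γ ⟶ X), Γ ∈ S ∧
      ∀ ⦃W : T⦄, W ∈ S → ∀ f : W ⟶ X, ∃! g : W ⟶ Γ, g ≫ ε = f := by
  obtain ⟨G, ⟨adj⟩⟩ := h.exists_rightAdjoint
  refine ⟨(G.obj X).obj, adj.counit.app X, (G.obj X).property, fun W hW f => ?_⟩
  refine ⟨(adj.homEquiv ⟨W, hW⟩ X f).hom, ?_, fun g hg => ?_⟩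
  · have hc := adj.homEquiv_counit (X := ⟨W, hW⟩) (Y := X)
      (g := adj.homEquiv ⟨W, hW⟩ X f)
    rw [Equiv.symm_apply_apply] at hc
    exact hc.symm
  · change (ObjectProperty.homMk (X := ⟨W, hW⟩) (Y := G.obj X) g).hom = _
    congr 1
    apply (adj.homEquiv ⟨W, hW⟩ X).symm.injective
    rw [Equiv.symm_apply_apply, adj.homEquiv_counit]
    exact hg

lemma reflection_prop (h : ReflectiveSet S) (X : T) :
    ∃ (L : T) (η : X ⟶ L), L ∈ S ∧
      ∀ ⦃W : T⦄, W ∈ S → ∀ f : X ⟶ W, ∃! g : L ⟶ W, η ≫ g = f := by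
  obtain ⟨F, ⟨adj⟩⟩ := h.exists_leftAdjoint
  refine ⟨(F.obj X).obj, adj.unit.app X, (F.obj X).property, fun W hW f => ?_⟩
  refine ⟨((adj.homEquiv X ⟨W, hW⟩).symm f).hom, ?_, fun g hg => ?_⟩
  · have hu := adj.homEquiv_unit (X := X) (Y := ⟨W, hW⟩)
      (f := (adj.homEquiv X ⟨W, hW⟩).symm f)
    rw [Equiv.apply_symm_apply] at hu
    exact hu.symm
  · change (ObjectProperty.homMk (X := F.obj X) (Y := ⟨W, hW⟩) g).hom = _
    congr 1
    apply (adj.homEquiv X ⟨W, hW⟩).injective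
    rw [adj.homEquiv_unit, Equiv.apply_symm_apply]
    exact hg

end Aux

/-- If `coloc(D)` is reflective then `coloc(D) = (^⊥D)^⊥`, and if `loc(D)` is
coreflective then `loc(D) = ^⊥(D^⊥)`. -/
theorem statement9 (D : Set T) :
    (ReflectiveSet (coloc D) → coloc D = rightOrth (leftOrth D)) ∧
    (CoreflectiveSet (loc D) → loc D = leftOrth (rightOrth D)) := by
  constructor
  · -- Part 1: reflective coloc
    intro hrefl
    obtain ⟨hPr, hFib, hCof, hExt⟩ := isColocalizing_coloc D
    have h0 : (0 : T) ∈ coloc D :=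
      zero_mem_of_closed hCof (hPr (fun x : PEmpty.{v+1} => x.elim) (fun i => i.elim))
    have hsh : ∀ {A : T}, A ∈ coloc D → ∀ n : ℤ, A⟦n⟧ ∈ coloc D :=
      fun hA n => shift_mem_of_closed hFib hCof hExt h0 hA n
    apply Set.Subset.antisymm
    · exact coloc_subset (isColocalizing_rightOrth (leftOrth D)) (subset_rightOrth_leftOrth D)
    · intro X hX
      obtain ⟨L, η, hL, huniv⟩ := reflection_prop hrefl X
      obtain ⟨Z, g, h, hT⟩ := distinguished_cocone_triangle η
      have claimB : ∀ ⦃W : T⦄, W ∈ coloc D → ∀ v : Z ⟶ W, v = 0 := by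
        intro W hW v
        have hηg : η ≫ g = 0 := comp_distTriang_mor_zero₁₂ _ hT
        have hgv : g ≫ v = 0 := by
          obtain ⟨q0, hq0, hq0u⟩ := huniv hW (0 : X ⟶ W)
          have e1 := hq0u (g ≫ v) (by show η ≫ g ≫ v = 0; rw [← assoc, hηg, zero_comp])
          have e2 := hq0u 0 (by show η ≫ (0 : L ⟶ W) = 0; rw [comp_zero])
          exact e1.trans e2.symm
        obtain ⟨q, hq⟩ := Triangle.yoneda_exact₃ _ hT v hgv
        have hq' : v = h ≫ q := hq
        have hW1 : W⟦(-1:ℤ)⟧ ∈ coloc D := hsh hW (-1)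
        obtain ⟨r, hr, -⟩ := huniv hW1
          ((shiftFunctorCompIsoId T (1:ℤ) (-1:ℤ) (by ring)).inv.app X ≫ q⟦(-1:ℤ)⟧')
        have hr' : η ≫ r =
            (shiftFunctorCompIsoId T (1:ℤ) (-1:ℤ) (by ring)).inv.app X ≫ q⟦(-1:ℤ)⟧' := hr
        have hfact : η⟦(1:ℤ)⟧' ≫
            (r⟦(1:ℤ)⟧' ≫ (shiftFunctorCompIsoId T (-1:ℤ) (1:ℤ) (by ring)).hom.app W) = q := by
          rw [← assoc, ← Functor.map_comp, hr', Functor.map_comp, assoc]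
          have hnat := (shiftFunctorCompIsoId T (-1:ℤ) (1:ℤ) (by ring)).hom.naturality q
          dsimp at hnat
          erw [hnat, ← assoc, shift_shiftFunctorCompIsoId_inv_app (1:ℤ) (-1:ℤ) (by ring) X,
            Iso.inv_hom_id_app]
          exact id_comp _
        have hhη : h ≫ η⟦(1:ℤ)⟧' = 0 := by
          have h3 : h ≫ (-(η⟦(1:ℤ)⟧')) = 0 :=
            comp_distTriang_mor_zero₂₃ _ (rot_of_distTriang _ hT)
          rw [Preadditive.comp_neg, neg_eq_zero] at h3
          exact h3
        rw [hq', ← hfact, ← assoc, hhη, zero_comp]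
      have hZl : Z ∈ leftOrth D := fun E hE k f => claimB (hsh (subset_coloc D hE) k) f
      have hh0 : h = 0 := by
        have h1 := hX hZl (-1)
          (h⟦(-1:ℤ)⟧' ≫ (shiftFunctorCompIsoId T (1:ℤ) (-1:ℤ) (by ring)).hom.app X)
        rw [← shift_map_zero_iff (-1) h,
          ← cancel_mono ((shiftFunctorCompIsoId T (1:ℤ) (-1:ℤ) (by ring)).hom.app X),
          zero_comp]
        exact h1
      have hZzero : IsZero Z := by
        obtain ⟨t, ht⟩ := Triangle.coyoneda_exact₃ _ hT (𝟙 Z)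
          (by show 𝟙 Z ≫ h = 0; rw [id_comp, hh0])
        have ht' : 𝟙 Z = t ≫ g := ht
        rw [IsZero.iff_id_eq_zero, ht', show t = 0 from claimB hL t]; exact zero_comp
      have hiso : IsIso η := (Triangle.isZero₃_iff_isIso₁ _ hT).1 hZzero
      exact mem_of_iso_of_closed hExt h0 (asIso η).symm hL
  · -- Part 2: coreflective loc
    intro hcorefl
    obtain ⟨hCop, hFib, hCof, hExt⟩ := isLocalizing_loc D
    have h0 : (0 : T) ∈ loc D :=
      zero_mem_of_closed hCof (hCop (fun x : PEmpty.{v+1} => x.elim) (fun i => i.elim))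
    have hsh : ∀ {A : T}, A ∈ loc D → ∀ n : ℤ, A⟦n⟧ ∈ loc D :=
      fun hA n => shift_mem_of_closed hFib hCof hExt h0 hA n
    apply Set.Subset.antisymm
    · exact loc_subset (isLocalizing_leftOrth (rightOrth D)) (subset_leftOrth_rightOrth D)
    · intro X hX
      obtain ⟨Γ, ε, hΓ, huniv⟩ := coreflection_prop hcorefl X
      obtain ⟨Z, g, h, hT⟩ := distinguished_cocone_triangle ε
      have claimA : ∀ ⦃W : T⦄, W ∈ loc D → ∀ u : W ⟶ Z, u = 0 := by
        intro W hW u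
        have h2 : h ≫ ε⟦(1:ℤ)⟧' = 0 := by
          have h3 : h ≫ (-(ε⟦(1:ℤ)⟧')) = 0 :=
            comp_distTriang_mor_zero₂₃ _ (rot_of_distTriang _ hT)
          rw [Preadditive.comp_neg, neg_eq_zero] at h3
          exact h3
        have h1 : (u ≫ h) ≫ ε⟦(1:ℤ)⟧' = 0 := by rw [assoc, h2, comp_zero]
        have hm : u ≫ h = 0 := by
          have hW1 : W⟦(-1:ℤ)⟧ ∈ loc D := hsh hW (-1)
          have key : ((u ≫ h)⟦(-1:ℤ)⟧' ≫
              (shiftFunctorCompIsoId T (1:ℤ) (-1:ℤ) (by ring)).hom.app Γ) ≫ ε = 0 := by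
            have hnat := (shiftFunctorCompIsoId T (1:ℤ) (-1:ℤ) (by ring)).hom.naturality ε
            dsimp at hnat
            rw [assoc, ← hnat, ← Functor.map_comp_assoc, h1, Functor.map_zero, zero_comp]
          obtain ⟨g0, hg0, hg0u⟩ := huniv hW1 (0 : W⟦(-1:ℤ)⟧ ⟶ X)
          have e1 := hg0u _ key
          have e2 := hg0u 0 (by show (0 : W⟦(-1:ℤ)⟧ ⟶ Γ) ≫ ε = 0; rw [zero_comp])
          have e3 : (u ≫ h)⟦(-1:ℤ)⟧' = 0 := by
            rw [← cancel_mono ((shiftFunctorCompIsoId T (1:ℤ) (-1:ℤ) (by ring)).hom.app Γ),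
              zero_comp]
            exact e1.trans e2.symm
          exact (shift_map_zero_iff (-1) (u ≫ h)).1 e3
        obtain ⟨w', hw'⟩ := Triangle.coyoneda_exact₃ _ hT u hm
        have hw'' : u = w' ≫ g := hw'
        obtain ⟨s, hs, -⟩ := huniv hW w'
        have hs' : s ≫ ε = w' := hs
        have hεg : ε ≫ g = 0 := comp_distTriang_mor_zero₁₂ _ hT
        rw [hw'', ← hs']; exact (assoc s ε g).trans (by rw [hεg, comp_zero])
      have hZr : Z ∈ rightOrth D := fun E hE k f => claimA (hsh (subset_loc D hE) k) f
      have hg0 : g = 0 := by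
        have h1 := hX hZr 0 (g ≫ (shiftFunctorZero T ℤ).inv.app Z)
        rw [← cancel_mono ((shiftFunctorZero T ℤ).inv.app Z), zero_comp]
        exact h1
      have hZzero : IsZero Z := by
        obtain ⟨t, ht⟩ := Triangle.yoneda_exact₃ _ hT (𝟙 Z)
          (by show g ≫ 𝟙 Z = 0; rw [comp_id, hg0])
        have ht' : 𝟙 Z = h ≫ t := ht
        rw [IsZero.iff_id_eq_zero, ht', claimA (hsh hΓ 1) t, comp_zero]
      have hiso : IsIso ε := (Triangle.isZero₃_iff_isIso₁ _ hT).1 hZzero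
      exact mem_of_iso_of_closed hExt h0 (asIso ε) hΓ

end Statements

end Paper
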